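/- For every F̂-invariant Borel probability measure ν̂ on Σ×X one has ∫_{Σ×X} φ̂ dν̂ ≤ ∫_Σ φ̃ d(ν̂∘π^{-1}), where π : Σ×X → Σ is the projection π(ω,t) := ω. -/

import Mathlib

open MeasureTheory Filter Topology Real

set_option linter.unusedSectionVars false

attribute [local instance] Classical.propDecidable

namespace POE

variable {A : Type} [Fintype A] [DecidableEq A] [TopologicalSpace A] [DiscreteTopology A]

/-- The one-sided compact topological Markov shift associated to the transition
matrix `Mtx`: the space of sequences `ω : ℕ → A` all of whose transitions are allowed. -/
abbrev SubShift (Mtx : A → A → Bool) : Type :=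
  {ω : ℕ → A // ∀ i, Mtx (ω i) (ω (i + 1)) = true}

variable (Mtx : A → A → Bool)

/-- The left shift `T` on the Markov shift. -/
def shiftT (ω : SubShift Mtx) : SubShift Mtx :=
  ⟨fun i => ω.1 (i + 1), fun i => ω.2 (i + 1)⟩

/-- The metric `d(ω,ω') = 2^{-min{i : ω_i ≠ ω'_i}}` on the Markov shift. -/
noncomputable def dShift (ω ω' : SubShift Mtx) : ℝ :=
  if h : ω = ω' then 0
  else (2 : ℝ) ^ (-(Nat.find (p := fun i => ¬ (ω.1 i = ω'.1 i))
      (by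
        by_contra hc
        push_neg at hc
        exact h (Subtype.ext (funext fun i => hc i))) : ℤ))

/-- The cylinder set `[w]` of a word `w` of length `n`. -/
def cylinder (n : ℕ) (w : Fin n → A) : Set (SubShift Mtx) :=
  {ω | ∀ i : Fin n, ω.1 i.1 = w i}

/-- Topological transitivity of the shift. -/
def TopologicallyTransitive : Prop :=
  ∀ U V : Set (SubShift Mtx), IsOpen U → IsOpen V → U.Nonempty → V.Nonempty →
    ∃ n : ℕ, (U ∩ (shiftT Mtx)^[n] ⁻¹' V).Nonempty

/-- Borel σ-algebra on the shift space. -/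
instance : MeasurableSpace (SubShift Mtx) := borel _

instance : BorelSpace (SubShift Mtx) := ⟨rfl⟩

variable {X : Type} [MetricSpace X]

/-- The random compositions `F_ω^k := F_{T^{k-1}ω} ∘ ⋯ ∘ F_ω`, with `F_ω^0 = id`. -/
def iterF (F : SubShift Mtx → X → X) (ω : SubShift Mtx) : ℕ → X → X
  | 0 => id
  | k + 1 => F ((shiftT Mtx)^[k] ω) ∘ iterF F ω k

/-- The concatenated sequence `w ω_a` of a word `w` of length `n` (ending with the symbol
starting `θ`) and a sequence `θ`. -/
def concatSeq (n : ℕ) (w : Fin n → A) (θ : ℕ → A) : ℕ → A :=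
  fun i => if h : i < n then w ⟨i, h⟩ else θ (i - n + 1)

theorem concat_mem (n : ℕ) (hn : 0 < n) (w : Fin n → A)
    (hadm : (cylinder Mtx n w).Nonempty) (θ : SubShift Mtx)
    (hθ : θ.1 0 = w ⟨n - 1, Nat.sub_lt hn one_pos⟩) :
    ∀ i, Mtx (concatSeq n w θ.1 i) (concatSeq n w θ.1 (i + 1)) = true := by
  obtain ⟨η, hη⟩ := hadm
  intro i
  unfold concatSeq
  by_cases h1 : i + 1 < n
  · have h0 : i < n := Nat.lt_of_succ_lt h1
    rw [dif_pos h0, dif_pos h1]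
    have e0 : η.1 i = w ⟨i, h0⟩ := hη ⟨i, h0⟩
    have e1 : η.1 (i + 1) = w ⟨i + 1, h1⟩ := hη ⟨i + 1, h1⟩
    rw [← e0, ← e1]
    exact η.2 i
  · by_cases h0 : i < n
    · have hi : i = n - 1 := by omega
      rw [dif_pos h0, dif_neg h1]
      have e2 : i + 1 - n + 1 = 1 := by omega
      rw [e2]
      subst hi
      rw [← hθ]
      exact θ.2 0
    · rw [dif_neg h0, dif_neg h1]
      have e4 : i + 1 - n + 1 = (i - n + 1) + 1 := by omega
      rw [e4]
      exact θ.2 (i - n + 1)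

/-- The point `w ω_a ∈ Σ` obtained by concatenating an admissible word `w` of
positive length ending with the symbol `a` and a point `ω_a ∈ [a]`. -/
noncomputable def wordPoint (n : ℕ) (w : Fin n → A) (a : A) (ωa : SubShift Mtx)
    (hωa : ωa.1 0 = a)
    (h : (cylinder Mtx n w).Nonempty ∧ ∃ hn : 0 < n, w ⟨n - 1, Nat.sub_lt hn one_pos⟩ = a) :
    SubShift Mtx :=
  ⟨concatSeq n w ωa.1,
    concat_mem Mtx n h.2.choose w h.1 ωa (hωa.trans h.2.choose_spec.symm)⟩

/-- The pinned partition function `Ž_n(φ_t, a)` of the family `{φ_t}_{t ∈ X}`: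
the sum over admissible words `w` of length `n` with `w_{n-1} = a` of
`exp (Σ_{k<n} φ_{F^k_{wω_a}(t)} (T^k (w ω_a)))`. -/
noncomputable def Zcheck (F : SubShift Mtx → X → X) (φ : X → SubShift Mtx → ℝ)
    (a : A) (ωa : SubShift Mtx) (hωa : ωa.1 0 = a) (n : ℕ) (t : X) : ℝ :=
  ∑ w : Fin n → A,
    if h : (cylinder Mtx n w).Nonempty ∧
        ∃ hn : 0 < n, w ⟨n - 1, Nat.sub_lt hn one_pos⟩ = a then
      Real.exp (∑ k ∈ Finset.range n,
        φ (iterF Mtx F (wordPoint Mtx n w a ωa hωa h) k t)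
          ((shiftT Mtx)^[k] (wordPoint Mtx n w a ωa hωa h)))
    else 0

/-- The pressure out of equilibrium
`P̌({φ_t}) = limsup_n (1/n) log sup_{t∈X} Ž_n(φ_t,a)`. -/
noncomputable def POEPressure (F : SubShift Mtx → X → X) (φ : X → SubShift Mtx → ℝ)
    (a : A) (ωa : SubShift Mtx) (hωa : ωa.1 0 = a) : ℝ :=
  Filter.limsup
    (fun n : ℕ => (n : ℝ)⁻¹ * Real.log (⨆ t : X, Zcheck Mtx F φ a ωa hωa n t))
    Filter.atTop

/-- The unpinned partition function
`Z_n = sup_t Σ_{w admissible, |w|=n} max_{θ ∈ [w]} exp (Σ_{k<n} φ_{F^k_θ(t)}(T^k θ))`,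
the maximum over the compact cylinder being realized as the `sSup` over `[w]`. -/
noncomputable def Zfull (F : SubShift Mtx → X → X) (φ : X → SubShift Mtx → ℝ) (n : ℕ) : ℝ :=
  ⨆ t : X, ∑ w : Fin n → A,
    if (cylinder Mtx n w).Nonempty then
      sSup ((fun θ : SubShift Mtx =>
        Real.exp (∑ k ∈ Finset.range n,
          φ (iterF Mtx F θ k t) ((shiftT Mtx)^[k] θ))) '' cylinder Mtx n w)
    else 0

/-- The maximal asymptotic instability potential
`φ̃(ω) = limsup_n sup_{t∈X} (1/n) Σ_{k<n} φ̂(F̂^k(ω,t))`. -/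
noncomputable def phiTilde (F : SubShift Mtx → X → X) (φ : X → SubShift Mtx → ℝ)
    (ω : SubShift Mtx) : ℝ :=
  Filter.limsup
    (fun n : ℕ => ⨆ t : X, (n : ℝ)⁻¹ *
      ∑ k ∈ Finset.range n, φ (iterF Mtx F ω k t) ((shiftT Mtx)^[k] ω))
    Filter.atTop

/-- The Kolmogorov–Sinai entropy `h_ν(T)` of a shift-invariant measure, computed through
cylinders: `h_ν(T) = lim_n (1/n) Σ_{|w|=n} (-ν[w] log ν[w])` (the limit exists by
subadditivity, so it coincides with this `limsup`). -/
noncomputable def entropyKS (ν : Measure (SubShift Mtx)) : ℝ :=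
  Filter.limsup
    (fun n : ℕ => (n : ℝ)⁻¹ *
      ∑ w : Fin n → A, Real.negMulLog ((ν (cylinder Mtx n w)).toReal))
    Filter.atTop

/-- The skew product `F̂(ω,t) = (Tω, F_ω(t))` on `Σ × X`. -/
def skewF (F : SubShift Mtx → X → X) (p : SubShift Mtx × X) : SubShift Mtx × X :=
  (shiftT Mtx p.1, F p.1 p.2)

/-- The pinned partition function of a single potential `φ : Σ → ℝ`. -/
noncomputable def Zpin (φ : SubShift Mtx → ℝ) (a : A) (ωa : SubShift Mtx)
    (hωa : ωa.1 0 = a) (n : ℕ) : ℝ :=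
  ∑ w : Fin n → A,
    if h : (cylinder Mtx n w).Nonempty ∧
        ∃ hn : 0 < n, w ⟨n - 1, Nat.sub_lt hn one_pos⟩ = a then
      Real.exp (∑ k ∈ Finset.range n, φ ((shiftT Mtx)^[k] (wordPoint Mtx n w a ωa hωa h)))
    else 0

/-- The topological pressure `P(φ) = limsup_n (1/n) log Σ_{|w|=n, w_{n-1}=a} exp (φ^{(n)}(wω_a))`
of a potential `φ : Σ → ℝ`. -/
noncomputable def topPressure (φ : SubShift Mtx → ℝ) (a : A) (ωa : SubShift Mtx)
    (hωa : ωa.1 0 = a) : ℝ :=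
  Filter.limsup (fun n : ℕ => (n : ℝ)⁻¹ * Real.log (Zpin Mtx φ a ωa hωa n)) Filter.atTop


/-! ### Auxiliary lemmas for `stmt5` -/

instance instSecondCountableSubShift : SecondCountableTopology (SubShift Mtx) :=
  (inferInstance : SecondCountableTopology {ω : ℕ → A | ∀ i, Mtx (ω i) (ω (i + 1)) = true})

lemma continuous_shiftT : Continuous (shiftT Mtx) := by
  apply Continuous.subtype_mk
  exact continuous_pi fun i => (continuous_apply (i + 1)).comp continuous_subtype_val

lemma dShift_nonneg (ω ω' : SubShift Mtx) : 0 ≤ dShift Mtx ω ω' := by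
  unfold dShift; split <;> positivity

lemma dShift_le (n : ℕ) (ω ω' : SubShift Mtx) (h : ∀ i < n, ω.1 i = ω'.1 i) :
    dShift Mtx ω ω' ≤ (2 : ℝ) ^ (-(n : ℤ)) := by
  unfold dShift
  split
  · positivity
  · rename_i hne
    apply zpow_le_zpow_right₀ one_le_two
    simp only [neg_le_neg_iff, Int.ofNat_le, Nat.cast_le]
    rw [Nat.le_find_iff]
    intro m hm
    exact not_not.mpr (h m hm)

lemma skew_iter {X : Type} [MetricSpace X] (F : SubShift Mtx → X → X) (ω : SubShift Mtx)
    (t : X) (k : ℕ) :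
    (skewF Mtx F)^[k] (ω, t) = ((shiftT Mtx)^[k] ω, iterF Mtx F ω k t) := by
  induction k with
  | zero => rfl
  | succ k ih =>
      rw [Function.iterate_succ_apply', ih, Function.iterate_succ_apply']
      rfl

lemma continuous_Fhat {X : Type} [MetricSpace X] (F : SubShift Mtx → X → X)
    (αF HF : ℝ) (hαF : 0 < αF) (hHF : 0 < HF)
    (hFHol : ∀ ω ω' t, dist (F ω t) (F ω' t) ≤ HF * dShift Mtx ω ω' ^ αF)
    (hFcont : ∀ ω, Continuous (F ω)) :
    Continuous fun p : SubShift Mtx × X => F p.1 p.2 := by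
  rw [continuous_iff_continuousAt]
  rintro ⟨ω₀, t₀⟩
  rw [ContinuousAt, Metric.tendsto_nhds]
  intro ε hε
  obtain ⟨n, hn⟩ : ∃ n : ℕ, HF * ((2 : ℝ) ^ (-(n : ℤ))) ^ αF < ε / 2 := by
    have h1 : ∀ n : ℕ, ((2 : ℝ) ^ (-(n : ℤ))) ^ αF = (((1 : ℝ) / 2) ^ αF) ^ n := by
      intro n
      have e1 : (2 : ℝ) ^ (-(n : ℤ)) = ((1 / 2 : ℝ)) ^ n := by
        rw [zpow_neg, zpow_natCast, ← inv_pow]; norm_num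
      rw [e1, ← Real.rpow_natCast ((1 / 2 : ℝ)) n, ← Real.rpow_mul (by norm_num), mul_comm,
        Real.rpow_mul (by norm_num), Real.rpow_natCast]
    have h2 : (((1 : ℝ) / 2) ^ αF) < 1 := Real.rpow_lt_one (by norm_num) (by norm_num) hαF
    have h3 : Tendsto (fun n : ℕ => HF * (((1 : ℝ) / 2) ^ αF) ^ n) atTop (𝓝 (HF * 0)) :=
      (tendsto_pow_atTop_nhds_zero_of_lt_one (by positivity) h2).const_mul HF
    rw [mul_zero] at h3
    obtain ⟨n, hn⟩ :=
      (h3.eventually (eventually_lt_nhds (by positivity : (0 : ℝ) < ε / 2))).exists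
    exact ⟨n, by rw [h1]; exact hn⟩
  have hU : IsOpen {ω : SubShift Mtx | ∀ i < n, ω.1 i = ω₀.1 i} := by
    have : {ω : SubShift Mtx | ∀ i < n, ω.1 i = ω₀.1 i} =
        ⋂ i ∈ Finset.range n, {ω : SubShift Mtx | ω.1 i = ω₀.1 i} := by
      ext ω; simp [Finset.mem_range]
    rw [this]
    apply isOpen_biInter_finset
    intro i _
    have hc : Continuous fun ω : SubShift Mtx => ω.1 i :=
      (continuous_apply i).comp continuous_subtype_val
    exact (isOpen_discrete {ω₀.1 i}).preimage hc
  have hV : IsOpen ((F ω₀) ⁻¹' Metric.ball (F ω₀ t₀) (ε / 2)) :=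
    Metric.isOpen_ball.preimage (hFcont ω₀)
  have hmem : ({ω : SubShift Mtx | ∀ i < n, ω.1 i = ω₀.1 i} ×ˢ
      ((F ω₀) ⁻¹' Metric.ball (F ω₀ t₀) (ε / 2))) ∈ 𝓝 (ω₀, t₀) :=
    (hU.prod hV).mem_nhds ⟨by simp, by simp [Metric.mem_ball, half_pos hε]⟩
  filter_upwards [hmem] with p hp
  obtain ⟨hp1, hp2⟩ := hp
  calc dist (F p.1 p.2) (F ω₀ t₀)
      ≤ dist (F p.1 p.2) (F ω₀ p.2) + dist (F ω₀ p.2) (F ω₀ t₀) := dist_triangle _ _ _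
    _ < ε / 2 + ε / 2 := by
        apply add_lt_add_of_le_of_lt
        · calc dist (F p.1 p.2) (F ω₀ p.2) ≤ HF * dShift Mtx p.1 ω₀ ^ αF := hFHol _ _ _
            _ ≤ HF * ((2 : ℝ) ^ (-(n : ℤ))) ^ αF := by
                apply mul_le_mul_of_nonneg_left _ hHF.le
                exact Real.rpow_le_rpow (dShift_nonneg Mtx _ _) (dShift_le Mtx n _ _ hp1) hαF.le
            _ ≤ ε / 2 := hn.le
        · exact hp2
    _ = ε := add_halves ε

lemma continuous_Sn {X : Type} [MetricSpace X] (F : SubShift Mtx → X → X)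
    (φ : X → SubShift Mtx → ℝ)
    (hφcont : Continuous fun p : SubShift Mtx × X => φ p.2 p.1)
    (hFhat : Continuous fun p : SubShift Mtx × X => F p.1 p.2) (n : ℕ) :
    Continuous fun p : SubShift Mtx × X =>
      ∑ k ∈ Finset.range n, φ (iterF Mtx F p.1 k p.2) ((shiftT Mtx)^[k] p.1) := by
  apply continuous_finset_sum
  intro k _
  have hskew : Continuous (skewF Mtx F) :=
    ((continuous_shiftT Mtx).comp continuous_fst).prodMk hFhat
  have hit : Continuous ((skewF Mtx F)^[k]) := hskew.iterate k
  have heq : (fun p : SubShift Mtx × X => φ (iterF Mtx F p.1 k p.2) ((shiftT Mtx)^[k] p.1)) =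
      (fun q : SubShift Mtx × X => φ q.2 q.1) ∘ (skewF Mtx F)^[k] := by
    funext p
    simp only [Function.comp_apply]
    rw [show (skewF Mtx F)^[k] p = (skewF Mtx F)^[k] (p.1, p.2) by rfl, skew_iter]
  rw [heq]
  exact hφcont.comp hit

/-- For every `F̂`-invariant Borel probability measure `ν̂` on `Σ × X`, `∫ φ̂ dν̂ ≤ ∫ φ̃ d(ν̂ ∘ π⁻¹)`. -/
theorem stmt5
    {A : Type} [Fintype A] [DecidableEq A] [Nonempty A]
    [TopologicalSpace A] [DiscreteTopology A]
    (Mtx : A → A → Bool)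
    {X : Type} [MetricSpace X] [CompactSpace X] [Nonempty X]
    [MeasurableSpace X] [BorelSpace X]
    (F : SubShift Mtx → X → X)
    (αF HF : ℝ) (hαF : 0 < αF) (hHF : 0 < HF)
    (hFHol : ∀ ω ω' t, dist (F ω t) (F ω' t) ≤ HF * dShift Mtx ω ω' ^ αF)
    (hFcont : ∀ ω, Continuous (F ω)) (hFbij : ∀ ω, Function.Bijective (F ω))
    (φ : X → SubShift Mtx → ℝ) (α H : ℝ) (hα : α ∈ Set.Ioc (0 : ℝ) 1) (hH : 0 < H)
    (hHol : ∀ t ω ω', |φ t ω - φ t ω'| ≤ H * dShift Mtx ω ω' ^ α)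
    (hBdd : ∀ t ω, |φ t ω| ≤ H)
    (hφcont : Continuous fun p : SubShift Mtx × X => φ p.2 p.1)
    (νhat : Measure (SubShift Mtx × X)) (hprob : IsProbabilityMeasure νhat)
    (hinv : MeasurePreserving (skewF Mtx F) νhat νhat) :
    ∫ p, φ p.2 p.1 ∂νhat ≤ ∫ ω, phiTilde Mtx F φ ω ∂(νhat.map Prod.fst) := by
  classical
  have hFhat : Continuous fun p : SubShift Mtx × X => F p.1 p.2 :=
    continuous_Fhat Mtx F αF HF hαF hHF hFHol hFcont
  have hskew : Continuous (skewF Mtx F) :=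
    ((continuous_shiftT Mtx).comp continuous_fst).prodMk hFhat
  have hSn := continuous_Sn Mtx F φ hφcont hFhat
  set μ := νhat.map Prod.fst with hμdef
  have hfst : Measurable (Prod.fst : SubShift Mtx × X → SubShift Mtx) := measurable_fst
  haveI : IsProbabilityMeasure μ := Measure.isProbabilityMeasure_map hfst.aemeasurable
  set g : ℕ → SubShift Mtx → ℝ := fun n ω => ⨆ t : X, (n : ℝ)⁻¹ *
      ∑ k ∈ Finset.range n, φ (iterF Mtx F ω k t) ((shiftT Mtx)^[k] ω) with hgdef
  have hPT : ∀ ω, phiTilde Mtx F φ ω = limsup (fun n => g n ω) atTop := fun ω => rfl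
  -- pointwise bound for the inner function
  have hinner : ∀ (n : ℕ) (ω : SubShift Mtx) (t : X),
      |(n : ℝ)⁻¹ * ∑ k ∈ Finset.range n, φ (iterF Mtx F ω k t) ((shiftT Mtx)^[k] ω)| ≤ H := by
    intro n ω t
    have h1 : |∑ k ∈ Finset.range n, φ (iterF Mtx F ω k t) ((shiftT Mtx)^[k] ω)| ≤ (n : ℝ) * H := by
      calc |∑ k ∈ Finset.range n, φ (iterF Mtx F ω k t) ((shiftT Mtx)^[k] ω)|
          ≤ ∑ k ∈ Finset.range n, |φ (iterF Mtx F ω k t) ((shiftT Mtx)^[k] ω)| :=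
            Finset.abs_sum_le_sum_abs _ _
        _ ≤ ∑ _k ∈ Finset.range n, H := Finset.sum_le_sum fun k _ => hBdd _ _
        _ = (n : ℝ) * H := by simp [mul_comm]
    rcases Nat.eq_zero_or_pos n with h0 | h0
    · rw [h0]; simp [hH.le]
    · have hn0 : (0 : ℝ) < n := by exact_mod_cast h0
      rw [abs_mul, abs_inv, Nat.abs_cast]
      calc (n : ℝ)⁻¹ * |∑ k ∈ Finset.range n, φ (iterF Mtx F ω k t) ((shiftT Mtx)^[k] ω)|
          ≤ (n : ℝ)⁻¹ * ((n : ℝ) * H) := by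
            exact mul_le_mul_of_nonneg_left h1 (by positivity)
        _ = H := by field_simp
  have hbddA : ∀ (n : ℕ) (ω : SubShift Mtx), BddAbove (Set.range fun t : X => (n : ℝ)⁻¹ *
      ∑ k ∈ Finset.range n, φ (iterF Mtx F ω k t) ((shiftT Mtx)^[k] ω)) := by
    intro n ω
    refine ⟨H, ?_⟩
    rintro x ⟨t, rfl⟩
    exact (abs_le.mp (hinner n ω t)).2
  have hgle : ∀ n ω, g n ω ≤ H := fun n ω => ciSup_le fun t => (abs_le.mp (hinner n ω t)).2
  have hgge : ∀ n ω, -H ≤ g n ω := fun n ω =>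
    le_trans (abs_le.mp (hinner n ω (Classical.arbitrary X))).1 (le_ciSup (hbddA n ω) _)
  -- measurability of g n
  have hgmeas : ∀ n, Measurable (g n) := by
    intro n
    apply LowerSemicontinuous.measurable
    apply lowerSemicontinuous_ciSup (f := fun (t : X) (ω : SubShift Mtx) => (n : ℝ)⁻¹ *
      ∑ k ∈ Finset.range n, φ (iterF Mtx F ω k t) ((shiftT Mtx)^[k] ω)) (hbddA n)
    intro t
    have hc : Continuous fun ω : SubShift Mtx => (n : ℝ)⁻¹ *
        ∑ k ∈ Finset.range n, φ (iterF Mtx F ω k t) ((shiftT Mtx)^[k] ω) :=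
      continuous_const.mul ((hSn n).comp (continuous_id.prodMk continuous_const))
    exact hc.lowerSemicontinuous
  have hPTmeas : Measurable (phiTilde Mtx F φ) := by
    have : phiTilde Mtx F φ = fun ω => limsup (fun n => g n ω) atTop := funext hPT
    rw [this]
    exact Measurable.limsup hgmeas
  have hPTle : ∀ ω, phiTilde Mtx F φ ω ≤ H := by
    intro ω
    rw [hPT]
    exact limsup_le_of_le (isCoboundedUnder_le_of_le atTop fun n => hgge n ω)
      (Eventually.of_forall fun n => hgle n ω)
  have hPTge : ∀ ω, -H ≤ phiTilde Mtx F φ ω := by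
    intro ω
    rw [hPT]
    exact le_limsup_of_frequently_le (Frequently.of_forall fun n => hgge n ω)
      (isBoundedUnder_of ⟨H, fun n => hgle n ω⟩)
  -- integrability helpers
  have hintμ : ∀ (f : SubShift Mtx → ℝ), Measurable f → (∀ ω, |f ω| ≤ H) → Integrable f μ := by
    intro f hf hb
    refine ⟨hf.aestronglyMeasurable, HasFiniteIntegral.of_bounded (C := H) (ae_of_all _ ?_)⟩
    intro ω; simpa [Real.norm_eq_abs] using hb ω
  have hintν : ∀ (f : SubShift Mtx × X → ℝ), Measurable f → (∀ p, |f p| ≤ H) →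
      Integrable f νhat := by
    intro f hf hb
    refine ⟨hf.aestronglyMeasurable, HasFiniteIntegral.of_bounded (C := H) (ae_of_all _ ?_)⟩
    intro p; simpa [Real.norm_eq_abs] using hb p
  set c := ∫ p, φ p.2 p.1 ∂νhat with hcdef
  -- Step 1 : for every n ≥ 1, c ≤ ∫ g n dμ
  have key : ∀ n : ℕ, 1 ≤ n → c ≤ ∫ ω, g n ω ∂μ := by
    intro n hn
    have hn0 : (0 : ℝ) < n := by exact_mod_cast hn
    have hcompmeas : ∀ k : ℕ, Continuous fun p : SubShift Mtx × X =>
        φ ((skewF Mtx F)^[k] p).2 ((skewF Mtx F)^[k] p).1 := fun k =>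
      hφcont.comp (hskew.iterate k)
    have hcomp : ∀ k : ℕ, ∫ p, φ ((skewF Mtx F)^[k] p).2 ((skewF Mtx F)^[k] p).1 ∂νhat = c := by
      intro k
      have hmp : MeasurePreserving ((skewF Mtx F)^[k]) νhat νhat := hinv.iterate k
      rw [hcdef]
      conv_rhs => rw [← hmp.map_eq]
      rw [integral_map hmp.measurable.aemeasurable hφcont.aestronglyMeasurable]
    have hterm : ∀ p : SubShift Mtx × X,
        ∑ k ∈ Finset.range n, φ (iterF Mtx F p.1 k p.2) ((shiftT Mtx)^[k] p.1) =
        ∑ k ∈ Finset.range n, φ ((skewF Mtx F)^[k] p).2 ((skewF Mtx F)^[k] p).1 := by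
      intro p
      refine Finset.sum_congr rfl fun k _ => ?_
      rw [show (skewF Mtx F)^[k] p = (skewF Mtx F)^[k] (p.1, p.2) by rfl, skew_iter]
    have hSum : ∫ p, (∑ k ∈ Finset.range n,
        φ (iterF Mtx F p.1 k p.2) ((shiftT Mtx)^[k] p.1)) ∂νhat = (n : ℝ) * c := by
      calc ∫ p, (∑ k ∈ Finset.range n,
            φ (iterF Mtx F p.1 k p.2) ((shiftT Mtx)^[k] p.1)) ∂νhat
          = ∫ p, (∑ k ∈ Finset.range n,
            φ ((skewF Mtx F)^[k] p).2 ((skewF Mtx F)^[k] p).1) ∂νhat := by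
            exact integral_congr_ae (ae_of_all _ hterm)
        _ = ∑ k ∈ Finset.range n,
            ∫ p, φ ((skewF Mtx F)^[k] p).2 ((skewF Mtx F)^[k] p).1 ∂νhat := by
            exact integral_finset_sum _ fun k _ =>
              hintν _ (hcompmeas k).measurable fun p => hBdd _ _
        _ = ∑ _k ∈ Finset.range n, c := Finset.sum_congr rfl fun k _ => hcomp k
        _ = (n : ℝ) * c := by simp [mul_comm]
    calc c = (n : ℝ)⁻¹ * ((n : ℝ) * c) := by field_simp
      _ = ∫ p, (n : ℝ)⁻¹ * (∑ k ∈ Finset.range n,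
          φ (iterF Mtx F p.1 k p.2) ((shiftT Mtx)^[k] p.1)) ∂νhat := by
          rw [integral_const_mul, hSum]
      _ ≤ ∫ p, g n p.1 ∂νhat := by
          apply integral_mono
          · exact hintν _ ((continuous_const.mul (hSn n)).measurable) fun p => hinner n p.1 p.2
          · exact hintν _ ((hgmeas n).comp hfst) fun p =>
              abs_le.mpr ⟨hgge n p.1, hgle n p.1⟩
          · intro p
            exact le_ciSup (hbddA n p.1) p.2
      _ = ∫ ω, g n ω ∂μ := by
          rw [hμdef, integral_map hfst.aemeasurable (hgmeas n).aestronglyMeasurable]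
  -- Step 2 : reverse Fatou via ℝ≥0∞
  set J : ℕ → ENNReal := fun n => ∫⁻ ω, ENNReal.ofReal (g n ω + H) ∂μ with hJdef
  have hIJ : ∀ n, ENNReal.ofReal ((∫ ω, g n ω ∂μ) + H) = J n := by
    intro n
    have hadd : ∫ ω, (g n ω + H) ∂μ = (∫ ω, g n ω ∂μ) + H := by
      rw [integral_add (hintμ _ (hgmeas n) fun ω => abs_le.mpr ⟨hgge n ω, hgle n ω⟩)
        (integrable_const H), integral_const]
      simp
    rw [← hadd]
    exact ofReal_integral_eq_lintegral_ofReal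
      ((hintμ _ (hgmeas n) fun ω => abs_le.mpr ⟨hgge n ω, hgle n ω⟩).add (integrable_const H))
      (ae_of_all _ fun ω => by simp only [Pi.zero_apply]; linarith [hgge n ω])
  have hFatou : limsup J atTop ≤
      ∫⁻ ω, limsup (fun n => ENNReal.ofReal (g n ω + H)) atTop ∂μ := by
    apply limsup_lintegral_le (fun _ => ENNReal.ofReal (2 * H))
    · exact fun n => ENNReal.measurable_ofReal.comp ((hgmeas n).add measurable_const)
    · intro n
      exact ae_of_all _ fun ω => ENNReal.ofReal_le_ofReal (by linarith [hgle n ω])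
    · simp [lintegral_const, ENNReal.mul_eq_top]
  have hpointwise : ∀ ω, limsup (fun n => ENNReal.ofReal (g n ω + H)) atTop =
      ENNReal.ofReal (phiTilde Mtx F φ ω + H) := by
    intro ω
    have hb1 : IsBoundedUnder (· ≤ ·) atTop (fun n => g n ω) :=
      isBoundedUnder_of ⟨H, fun n => hgle n ω⟩
    have hb2 : IsCoboundedUnder (· ≤ ·) atTop (fun n => g n ω) :=
      isCoboundedUnder_le_of_le atTop fun n => hgge n ω
    have hb1' : IsBoundedUnder (· ≤ ·) atTop (fun n => g n ω + H) :=
      isBoundedUnder_of ⟨2 * H, fun n => by linarith [hgle n ω]⟩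
    have hb2' : IsCoboundedUnder (· ≤ ·) atTop (fun n => g n ω + H) :=
      isCoboundedUnder_le_of_le atTop (x := -H + H) fun n => by linarith [hgge n ω]
    have e2 : limsup (fun n => g n ω + H) atTop = limsup (fun n => g n ω) atTop + H := by
      have := Monotone.map_limsup_of_continuousAt (F := atTop) (f := fun x : ℝ => x + H)
        (fun a b hab => by simpa using add_le_add_right hab H) (fun n => g n ω)
        ((continuous_add_right H).continuousAt) hb1 hb2
      exact this.symm
    have e1 := Monotone.map_limsup_of_continuousAt (F := atTop) (f := ENNReal.ofReal)
      (fun a b hab => ENNReal.ofReal_le_ofReal hab) (fun n => g n ω + H)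
      (ENNReal.continuous_ofReal.continuousAt) hb1' hb2'
    rw [hPT, ← e2]
    exact e1.symm
  have hlastint : Integrable (fun ω => phiTilde Mtx F φ ω + H) μ :=
    (hintμ _ hPTmeas fun ω => abs_le.mpr ⟨hPTge ω, hPTle ω⟩).add (integrable_const H)
  have hlast : ∫⁻ ω, ENNReal.ofReal (phiTilde Mtx F φ ω + H) ∂μ =
      ENNReal.ofReal ((∫ ω, phiTilde Mtx F φ ω ∂μ) + H) := by
    have hadd : ∫ ω, (phiTilde Mtx F φ ω + H) ∂μ = (∫ ω, phiTilde Mtx F φ ω ∂μ) + H := by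
      rw [integral_add (hintμ _ hPTmeas fun ω => abs_le.mpr ⟨hPTge ω, hPTle ω⟩)
        (integrable_const H), integral_const]
      simp
    rw [← hadd]
    exact (ofReal_integral_eq_lintegral_ofReal hlastint
      (ae_of_all _ fun ω => by simp only [Pi.zero_apply]; linarith [hPTge ω])).symm
  have hstep : ∀ n : ℕ, 1 ≤ n → ENNReal.ofReal (c + H) ≤ J n := by
    intro n hn
    rw [← hIJ n]
    exact ENNReal.ofReal_le_ofReal (by linarith [key n hn])
  have hlimsup : ENNReal.ofReal (c + H) ≤ limsup J atTop :=
    le_limsup_of_frequently_le (((eventually_ge_atTop 1).mono hstep).frequently)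
      (isBoundedUnder_of ⟨⊤, fun _ => le_top⟩)
  have hchain : ENNReal.ofReal (c + H) ≤
      ENNReal.ofReal ((∫ ω, phiTilde Mtx F φ ω ∂μ) + H) := by
    calc ENNReal.ofReal (c + H) ≤ limsup J atTop := hlimsup
      _ ≤ ∫⁻ ω, limsup (fun n => ENNReal.ofReal (g n ω + H)) atTop ∂μ := hFatou
      _ = ∫⁻ ω, ENNReal.ofReal (phiTilde Mtx F φ ω + H) ∂μ :=
          lintegral_congr fun ω => by rw [hpointwise ω]
      _ = ENNReal.ofReal ((∫ ω, phiTilde Mtx F φ ω ∂μ) + H) := hlast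
  have hPTint_ge : -H ≤ ∫ ω, phiTilde Mtx F φ ω ∂μ := by
    have := integral_mono (integrable_const (-H))
      (hintμ _ hPTmeas fun ω => abs_le.mpr ⟨hPTge ω, hPTle ω⟩) hPTge
    simpa using this
  have hfin : c + H ≤ (∫ ω, phiTilde Mtx F φ ω ∂μ) + H :=
    (ENNReal.ofReal_le_ofReal_iff (by linarith)).mp hchain
  linarith


end POE
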